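/- Let E and E' be real Hilbert spaces, X ⊆ E and Y ⊆ E' nonempty closed convex sets each of diameter at most D, and F : E × E' → ℝ a differentiable function that is convex-concave on X × Y, with saddle operator G(x,y) = (∇_x F(x,y), −∇_y F(x,y)). Assume G is monotone and ℓ-Lipschitz on X × Y. Let T ≥ 1, set α = 1/ℓ, fix z₀ ∈ X × Y, and define the Extragradient iterates z_{t+1/2} = Π_{X×Y}(z_t − α·G(z_t)) and z_{t+1} = Π_{X×Y}(z_t − α·G(z_{t+1/2})) for t = 0, …, T−1. Let (x̄_{T+1/2}, ȳ_{T+1/2}) = (1/T)·Σ_{t=0}^{T−1} z_{t+1/2}. Then F(x̄_{T+1/2}, y) − F(x, ȳ_{T+1/2}) ≤ ℓD²/T for every (x, y) ∈ X × Y. -/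

import Mathlib

open RealInnerProductSpace Topology

noncomputable section

variable {E E' : Type*} [NormedAddCommGroup E] [InnerProductSpace ℝ E] [CompleteSpace E]
  [NormedAddCommGroup E'] [InnerProductSpace ℝ E'] [CompleteSpace E']

/-- The saddle operator `G(x,y) = (∇ₓ F(x,y), −∇_y F(x,y))` on the Hilbert product
`WithLp 2 (E × E')`. -/
def saddleOp (F : E × E' → ℝ) (z : WithLp 2 (E × E')) : WithLp 2 (E × E') :=
  (WithLp.equiv 2 (E × E')).symm
    (gradient (fun u => F (u, (WithLp.equiv 2 (E × E') z).2)) (WithLp.equiv 2 (E × E') z).1,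
     -gradient (fun v => F ((WithLp.equiv 2 (E × E') z).1, v)) (WithLp.equiv 2 (E × E') z).2)

/-- `X × Y` as a subset of the Hilbert product. -/
def prodSet (X : Set E) (Y : Set E') : Set (WithLp 2 (E × E')) :=
  (WithLp.equiv 2 (E × E')) ⁻¹' (X ×ˢ Y)

/-- `p` is the metric projection of `v` onto `S`. -/
def IsProjOn {H : Type*} [NormedAddCommGroup H] (S : Set H) (v p : H) : Prop :=
  p ∈ S ∧ ∀ w ∈ S, ‖v - p‖ ≤ ‖v - w‖

section Aux
variable {H : Type*} [NormedAddCommGroup H] [InnerProductSpace ℝ H]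

omit [CompleteSpace E] in
lemma isProjOn_inner_le {S : Set H} (hS : Convex ℝ S) {v p : H}
    (h : IsProjOn S v p) : ∀ u ∈ S, ⟪v - p, u - p⟫ ≤ 0 := by
  have hp := h.1
  haveI : Nonempty S := ⟨⟨p, hp⟩⟩
  rw [← norm_eq_iInf_iff_real_inner_le_zero hS hp]
  refine le_antisymm (le_ciInf fun u => h.2 u u.2) ?_
  have hb : BddBelow (Set.range fun w : S => ‖v - (w : H)‖) :=
    ⟨0, by rintro x ⟨u, rfl⟩; exact norm_nonneg _⟩
  exact ciInf_le hb ⟨p, hp⟩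

lemma inner_triple (a b c : H) :
    2 * ⟪a - b, b - c⟫ = ‖a - c‖ ^ 2 - ‖a - b‖ ^ 2 - ‖b - c‖ ^ 2 := by
  have h := @norm_add_sq_real H _ _ (a - b) (b - c)
  have h2 : a - c = (a - b) + (b - c) := by abel
  rw [← h2] at h
  linarith

variable [CompleteSpace H]

lemma grad_ineq {X : Set H} {f : H → ℝ} (hf : ConvexOn ℝ X f)
    {p u : H} (hp : p ∈ X) (hu : u ∈ X) {g : H} (hg : HasGradientAt f g p) :
    ⟪g, u - p⟫ ≤ f u - f p := by
  set φ : ℝ → ℝ := fun t => f (p + t • (u - p)) with hφdef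
  have hφ0 : φ 0 = f p := by simp [hφdef]
  have hL : HasDerivAt (fun s : ℝ => p + s • (u - p)) (u - p) 0 := by
    simpa using ((hasDerivAt_id (0:ℝ)).smul_const (u - p)).const_add p
  have hφ : HasDerivAt φ ⟪g, u - p⟫ 0 := by
    have hgF : HasFDerivAt f (InnerProductSpace.toDual ℝ H g) (p + (0:ℝ) • (u - p)) := by
      simpa using hg.hasFDerivAt
    have h1 := hgF.comp_hasDerivAt 0 hL
    simpa [hφdef, InnerProductSpace.toDual_apply_apply, Function.comp_def] using h1
  have hslope : Filter.Tendsto (slope φ 0) (𝓝[>] 0) (𝓝 ⟪g, u - p⟫) :=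
    (hasDerivAt_iff_tendsto_slope.mp hφ).mono_left
      (nhdsWithin_mono _ fun t ht => ne_of_gt ht)
  refine le_of_tendsto hslope ?_
  filter_upwards [Ioc_mem_nhdsGT_of_mem (Set.mem_Ico.mpr ⟨le_rfl, zero_lt_one⟩)] with t ht
  obtain ⟨ht0, ht1⟩ := ht
  have hmem : φ t ≤ (1 - t) * f p + t * f u := by
    have h3 := hf.2 hp hu (sub_nonneg.mpr ht1) ht0.le (by ring : (1 - t) + t = 1)
    have h4 : (1 - t) • p + t • u = p + t • (u - p) := by
      rw [smul_sub]; module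
    rw [h4] at h3
    simpa [hφdef, smul_eq_mul] using h3
  have hs : slope φ 0 t = (φ t - φ 0) / t := by
    rw [slope_def_field]; ring_nf
  rw [hs, hφ0, div_le_iff₀ ht0]
  nlinarith [hmem]

end Aux

set_option maxHeartbeats 1000000 in
/-- Lemma B.6: `O(1/T)` convergence of Extragradient.
With stepsize `α = 1/ℓ`, the Extragradient iterates
`z_{t+1/2} = Π_{X×Y}(z_t − α G(z_t))`, `z_{t+1} = Π_{X×Y}(z_t − α G(z_{t+1/2}))`
(half-iterates denoted `w t`) satisfy, for the average of the half-iterates,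
`F(x̄_{T+1/2}, y) − F(x, ȳ_{T+1/2}) ≤ ℓD²/T` for every `(x,y) ∈ X × Y`. -/
theorem extragradient_convergence
    (X : Set E) (Y : Set E') (hXne : X.Nonempty) (hYne : Y.Nonempty)
    (hXcl : IsClosed X) (hYcl : IsClosed Y) (hXcv : Convex ℝ X) (hYcv : Convex ℝ Y)
    (D : ℝ) (hXD : ∀ s₁ ∈ X, ∀ s₂ ∈ X, ‖s₁ - s₂‖ ≤ D) (hYD : ∀ s₁ ∈ Y, ∀ s₂ ∈ Y, ‖s₁ - s₂‖ ≤ D)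
    (F : E × E' → ℝ) (hFdiff : Differentiable ℝ F)
    (hcvx : ∀ y ∈ Y, ConvexOn ℝ X (fun x => F (x, y)))
    (hccv : ∀ x ∈ X, ConcaveOn ℝ Y (fun y => F (x, y)))
    (ℓ : ℝ) (hℓ : 0 < ℓ)
    (hmono : ∀ z₁ ∈ prodSet X Y, ∀ z₂ ∈ prodSet X Y,
      0 ≤ ⟪saddleOp F z₁ - saddleOp F z₂, z₁ - z₂⟫)
    (hlip : ∀ z₁ ∈ prodSet X Y, ∀ z₂ ∈ prodSet X Y,
      ‖saddleOp F z₁ - saddleOp F z₂‖ ≤ ℓ * ‖z₁ - z₂‖)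
    (T : ℕ) (hT : 1 ≤ T) (α : ℝ) (hα : α = 1 / ℓ)
    (z w : ℕ → WithLp 2 (E × E')) (hz0 : z 0 ∈ prodSet X Y)
    (hhalf : ∀ t < T, IsProjOn (prodSet X Y) (z t - α • saddleOp F (z t)) (w t))
    (hfull : ∀ t < T, IsProjOn (prodSet X Y) (z t - α • saddleOp F (w t)) (z (t + 1))) :
    ∀ x ∈ X, ∀ y ∈ Y,
      F ((WithLp.equiv 2 (E × E') ((T : ℝ)⁻¹ • ∑ t ∈ Finset.range T, w t)).1, y) -
        F (x, (WithLp.equiv 2 (E × E') ((T : ℝ)⁻¹ • ∑ t ∈ Finset.range T, w t)).2) ≤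
      ℓ * D ^ 2 / T := by
  intro x hx y hy
  set G := saddleOp F with hGdef
  set S := prodSet X Y with hSdef
  have memS : ∀ v : WithLp 2 (E × E'), v ∈ S ↔ v.fst ∈ X ∧ v.snd ∈ Y := fun v => Iff.rfl
  have hScv : Convex ℝ S :=
    (hXcv.prod hYcv).linear_preimage (WithLp.linearEquiv 2 ℝ (E × E')).toLinearMap
  have hα' : (0:ℝ) < α := by rw [hα]; positivity
  have hαℓ : α * ℓ = 1 := by rw [hα]; field_simp
  have hzS : ∀ t, t ≤ T → z t ∈ S := by
    intro t
    induction t with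
    | zero => intro _; exact hz0
    | succ n _ => intro h; exact (hfull n (by omega)).1
  have hwS : ∀ t, t < T → w t ∈ S := fun t ht => (hhalf t ht).1
  -- key per-step bound
  have step : ∀ u ∈ S, ∀ t, t < T →
      α * ⟪G (w t), w t - u⟫ ≤ (‖z t - u‖ ^ 2 - ‖z (t + 1) - u‖ ^ 2) / 2 := by
    intro u hu t ht
    set a := z t with ha
    set b := w t with hb
    set c := z (t + 1) with hc
    have haS : a ∈ S := hzS t ht.le
    have hbS : b ∈ S := hwS t ht
    have hcS : c ∈ S := hzS (t + 1) ht
    set gw := G b with hgw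
    set gz := G a with hgz
    have h1 : ⟪(a - α • gw) - c, u - c⟫ ≤ 0 := isProjOn_inner_le hScv (hfull t ht) u hu
    have h2 : ⟪(a - α • gz) - b, c - b⟫ ≤ 0 := isProjOn_inner_le hScv (hhalf t ht) c hcS
    have exp1 : ⟪(a - α • gw) - c, u - c⟫ = ⟪a - c, u - c⟫ - α * ⟪gw, u - c⟫ := by
      rw [show (a - α • gw) - c = (a - c) - α • gw by abel, inner_sub_left,
        real_inner_smul_left]
    have exp2 : ⟪(a - α • gz) - b, c - b⟫ = ⟪a - b, c - b⟫ - α * ⟪gz, c - b⟫ := by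
      rw [show (a - α • gz) - b = (a - b) - α • gz by abel, inner_sub_left,
        real_inner_smul_left]
    have f1 : ⟪a - c, u - c⟫ = -⟪a - c, c - u⟫ := by
      rw [show u - c = -(c - u) by abel, inner_neg_right]
    have f2 : ⟪a - b, c - b⟫ = -⟪a - b, b - c⟫ := by
      rw [show c - b = -(b - c) by abel, inner_neg_right]
    have f3 : ⟪gz, c - b⟫ = -⟪gz, b - c⟫ := by
      rw [show c - b = -(b - c) by abel, inner_neg_right]
    have f4 : ⟪gw, u - c⟫ = -⟪gw, c - u⟫ := by
      rw [show u - c = -(c - u) by abel, inner_neg_right]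
    have split : ⟪gw, b - u⟫ = ⟪gz, b - c⟫ + ⟪gw - gz, b - c⟫ + ⟪gw, c - u⟫ := by
      rw [show b - u = (b - c) + (c - u) by abel, inner_add_right, inner_sub_left]; ring
    have E1 := inner_triple a c u
    have E2 := inner_triple a b c
    have h3 : ⟪gw - gz, b - c⟫ ≤ ℓ * ‖a - b‖ * ‖b - c‖ := by
      have hba : ‖b - a‖ = ‖a - b‖ := norm_sub_rev _ _
      calc ⟪gw - gz, b - c⟫ ≤ ‖gw - gz‖ * ‖b - c‖ := real_inner_le_norm _ _
        _ ≤ (ℓ * ‖a - b‖) * ‖b - c‖ := by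
            refine mul_le_mul_of_nonneg_right ?_ (norm_nonneg _)
            rw [← hba]; exact hlip b hbS a haS
        _ = ℓ * ‖a - b‖ * ‖b - c‖ := by ring
    have h3' : α * ⟪gw - gz, b - c⟫ ≤ ‖a - b‖ * ‖b - c‖ := by
      calc α * ⟪gw - gz, b - c⟫ ≤ α * (ℓ * ‖a - b‖ * ‖b - c‖) :=
            mul_le_mul_of_nonneg_left h3 hα'.le
        _ = (α * ℓ) * (‖a - b‖ * ‖b - c‖) := by ring
        _ = ‖a - b‖ * ‖b - c‖ := by rw [hαℓ, one_mul]
    have h4 : ‖a - b‖ * ‖b - c‖ ≤ (‖a - b‖ ^ 2 + ‖b - c‖ ^ 2) / 2 := by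
      nlinarith [sq_nonneg (‖a - b‖ - ‖b - c‖)]
    have b1 : α * ⟪gw, c - u⟫ ≤ ⟪a - c, c - u⟫ := by
      rw [exp1, f1, f4] at h1; linarith
    have b2 : α * ⟪gz, b - c⟫ ≤ ⟪a - b, b - c⟫ := by
      rw [exp2, f2, f3] at h2; linarith
    have split' : α * ⟪gw, b - u⟫
        = α * ⟪gz, b - c⟫ + α * ⟪gw - gz, b - c⟫ + α * ⟪gw, c - u⟫ := by
      rw [split]; ring
    linarith [E1, E2, b1, b2, h3', h4, split']
  -- summation + telescoping
  have sum_key : ∀ u ∈ S, (∑ t ∈ Finset.range T, ⟪G (w t), w t - u⟫)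
      ≤ ℓ * (‖z 0 - u‖ ^ 2 / 2) := by
    intro u hu
    have h1 : α * ∑ t ∈ Finset.range T, ⟪G (w t), w t - u⟫
        ≤ ∑ t ∈ Finset.range T, (‖z t - u‖ ^ 2 / 2 - ‖z (t + 1) - u‖ ^ 2 / 2) := by
      rw [Finset.mul_sum]
      refine Finset.sum_le_sum fun t ht' => ?_
      have := step u hu t (Finset.mem_range.mp ht')
      linarith
    rw [Finset.sum_range_sub' (fun t => ‖z t - u‖ ^ 2 / 2)] at h1
    have h2 : α * ∑ t ∈ Finset.range T, ⟪G (w t), w t - u⟫ ≤ ‖z 0 - u‖ ^ 2 / 2 := by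
      have := sq_nonneg ‖z T - u‖
      linarith
    calc (∑ t ∈ Finset.range T, ⟪G (w t), w t - u⟫)
        = ℓ * (α * ∑ t ∈ Finset.range T, ⟪G (w t), w t - u⟫) := by
          rw [← mul_assoc, mul_comm ℓ α, hαℓ, one_mul]
      _ ≤ ℓ * (‖z 0 - u‖ ^ 2 / 2) := mul_le_mul_of_nonneg_left h2 hℓ.le
  -- the comparison point
  set u : WithLp 2 (E × E') := (WithLp.equiv 2 (E × E')).symm (x, y) with hu_def
  have huS : u ∈ S := by
    rw [memS]
    constructor <;> simp [hu_def, hx, hy]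
  have hDnn : 0 ≤ D := by
    obtain ⟨x0, hx0⟩ := hXne
    simpa using hXD x0 hx0 x0 hx0
  have hz0u : ‖z 0 - u‖ ^ 2 ≤ 2 * D ^ 2 := by
    have hnr := WithLp.prod_norm_sq_eq_of_L2 (z 0 - u)
    have e1 : (z 0 - u).fst = (z 0).fst - x := rfl
    have e2 : (z 0 - u).snd = (z 0).snd - y := rfl
    have hz0m := (memS (z 0)).mp hz0
    have b1 : ‖(z 0).fst - x‖ ≤ D := hXD _ hz0m.1 x hx
    have b2 : ‖(z 0).snd - y‖ ≤ D := hYD _ hz0m.2 y hy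
    have s1 : ‖(z 0).fst - x‖ ^ 2 ≤ D ^ 2 := by nlinarith [norm_nonneg ((z 0).fst - x)]
    have s2 : ‖(z 0).snd - y‖ ^ 2 ≤ D ^ 2 := by nlinarith [norm_nonneg ((z 0).snd - y)]
    rw [hnr, e1, e2]
    linarith
  -- per-iterate gradient bound
  have gb : ∀ t, t < T → F ((w t).fst, y) - F (x, (w t).snd) ≤ ⟪G (w t), w t - u⟫ := by
    intro t ht
    have hbS := (memS (w t)).mp (hwS t ht)
    set p := (w t).fst with hp_def
    set q := (w t).snd with hq_def
    have hpX : p ∈ X := hbS.1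
    have hqY : q ∈ Y := hbS.2
    have hd1 : DifferentiableAt ℝ (fun u' : E => F (u', q)) p :=
      (hFdiff (p, q)).comp p (differentiableAt_id.prodMk (differentiableAt_const q))
    have hd2 : DifferentiableAt ℝ (fun v : E' => F (p, v)) q :=
      (hFdiff (p, q)).comp q ((differentiableAt_const p).prodMk differentiableAt_id)
    set g1 := gradient (fun u' : E => F (u', q)) p with hg1_def
    set g2 := gradient (fun v : E' => F (p, v)) q with hg2_def
    have hg1 : HasGradientAt (fun u' : E => F (u', q)) g1 p := hd1.hasGradientAt
    have hg2 : HasGradientAt (fun v : E' => F (p, v)) g2 q := hd2.hasGradientAt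
    have hg2n : HasGradientAt (fun v : E' => -F (p, v)) (-g2) q := by
      rw [hasGradientAt_iff_hasFDerivAt] at hg2 ⊢
      rw [map_neg]; exact hg2.neg
    have c1 : ⟪g1, x - p⟫ ≤ F (x, q) - F (p, q) := grad_ineq (hcvx q hqY) hpX hx hg1
    have c2 : ⟪-g2, y - q⟫ ≤ (-F (p, y)) - (-F (p, q)) :=
      grad_ineq ((hccv p hpX).neg) hqY hy hg2n
    have hrhs : ⟪G (w t), w t - u⟫ = ⟪g1, p - x⟫ + ⟪-g2, q - y⟫ := rfl
    have flip1 : ⟪g1, p - x⟫ = -⟪g1, x - p⟫ := by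
      rw [show p - x = -(x - p) by abel, inner_neg_right]
    have flip2 : ⟪-g2, q - y⟫ = -⟪-g2, y - q⟫ := by
      rw [show q - y = -(y - q) by abel, inner_neg_right]
    rw [hrhs, flip1, flip2]
    linarith
  -- averaging / Jensen
  have hTpos : (0:ℝ) < (T:ℝ) := by exact_mod_cast hT
  have hsum1 : (∑ _t ∈ Finset.range T, (T:ℝ)⁻¹) = 1 := by
    rw [Finset.sum_const, Finset.card_range, nsmul_eq_mul, mul_inv_cancel₀ hTpos.ne']
  have havg : WithLp.equiv 2 (E × E') ((T:ℝ)⁻¹ • ∑ t ∈ Finset.range T, w t)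
      = (T:ℝ)⁻¹ • ∑ t ∈ Finset.range T, WithLp.equiv 2 (E × E') (w t) := by
    simp only [WithLp.equiv_apply, WithLp.ofLp_smul, WithLp.ofLp_sum]
  have hfst : (WithLp.equiv 2 (E × E') ((T:ℝ)⁻¹ • ∑ t ∈ Finset.range T, w t)).1
      = ∑ t ∈ Finset.range T, (T:ℝ)⁻¹ • (w t).fst := by
    rw [havg, Prod.smul_fst, Prod.fst_sum, Finset.smul_sum]
    simp only [WithLp.equiv_apply, WithLp.ofLp_fst]
  have hsnd : (WithLp.equiv 2 (E × E') ((T:ℝ)⁻¹ • ∑ t ∈ Finset.range T, w t)).2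
      = ∑ t ∈ Finset.range T, (T:ℝ)⁻¹ • (w t).snd := by
    rw [havg, Prod.smul_snd, Prod.snd_sum, Finset.smul_sum]
    simp only [WithLp.equiv_apply, WithLp.ofLp_snd]
  have J1 : F ((WithLp.equiv 2 (E × E') ((T:ℝ)⁻¹ • ∑ t ∈ Finset.range T, w t)).1, y)
      ≤ ∑ t ∈ Finset.range T, (T:ℝ)⁻¹ • F ((w t).fst, y) := by
    rw [hfst]
    exact (hcvx y hy).map_sum_le (fun i _ => by positivity) hsum1
      (fun i hi => ((memS (w i)).mp (hwS i (Finset.mem_range.mp hi))).1)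
  have J2 : (∑ t ∈ Finset.range T, (T:ℝ)⁻¹ • F (x, (w t).snd))
      ≤ F (x, (WithLp.equiv 2 (E × E') ((T:ℝ)⁻¹ • ∑ t ∈ Finset.range T, w t)).2) := by
    rw [hsnd]
    exact (hccv x hx).le_map_sum (fun i _ => by positivity) hsum1
      (fun i hi => ((memS (w i)).mp (hwS i (Finset.mem_range.mp hi))).2)
  have main : (∑ t ∈ Finset.range T, (T:ℝ)⁻¹ • F ((w t).fst, y))
      - (∑ t ∈ Finset.range T, (T:ℝ)⁻¹ • F (x, (w t).snd)) ≤ ℓ * D ^ 2 / (T:ℝ) := by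
    rw [← Finset.sum_sub_distrib]
    calc (∑ t ∈ Finset.range T, ((T:ℝ)⁻¹ • F ((w t).fst, y) - (T:ℝ)⁻¹ • F (x, (w t).snd)))
        ≤ ∑ t ∈ Finset.range T, (T:ℝ)⁻¹ * ⟪G (w t), w t - u⟫ := by
          refine Finset.sum_le_sum fun t ht' => ?_
          have hgb := gb t (Finset.mem_range.mp ht')
          have : (T:ℝ)⁻¹ • F ((w t).fst, y) - (T:ℝ)⁻¹ • F (x, (w t).snd)
              = (T:ℝ)⁻¹ * (F ((w t).fst, y) - F (x, (w t).snd)) := by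
            simp [smul_eq_mul]; ring
          rw [this]
          exact mul_le_mul_of_nonneg_left hgb (by positivity)
      _ = (T:ℝ)⁻¹ * ∑ t ∈ Finset.range T, ⟪G (w t), w t - u⟫ := by
          rw [Finset.mul_sum]
      _ ≤ (T:ℝ)⁻¹ * (ℓ * (‖z 0 - u‖ ^ 2 / 2)) := by
          refine mul_le_mul_of_nonneg_left (sum_key u huS) (by positivity)
      _ ≤ (T:ℝ)⁻¹ * (ℓ * (2 * D ^ 2 / 2)) := by
          refine mul_le_mul_of_nonneg_left (mul_le_mul_of_nonneg_left ?_ hℓ.le) (by positivity)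
          linarith
      _ = ℓ * D ^ 2 / (T:ℝ) := by field_simp
  linarith [J1, J2, main]
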